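/- Let p : X̃ → X be the pullback (induced covering) of a Γ-covering p : Ỹ → Y along a continuous map f : X → Y, with X path-connected, and let f_♯ : X̃ → Ỹ be the canonical projection. Suppose pseudo-sections λ_Y : Y → Ỹ and λ : X → X̃ satisfy f_♯(λ(x₀)) = λ_Y(f(x₀)) at some point x₀. Then the monodromy of the induced covering equals the pullback of the monodromy of p, i.e. μ_λ = μ_{λ_Y} ∘ Π(f), if and only if f_♯ ∘ λ = λ_Y ∘ f everywhere. -/

import Mathlib

/-!
STATEMENT 13: For the pullback of a Γ-covering `p : Ỹ → Y` along `f : X → Y` (with `X`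
path-connected), with pseudo-sections agreeing over one point `x₀`, the monodromy of the
induced covering is the pullback of the monodromy of `p` along `Π f` iff the
pseudo-sections are compatible everywhere: `f_♯ ∘ λ = λ_Y ∘ f`.
-/

structure GammaCovering (Γ : Type*) [Group Γ] (Xt X : Type*)
    [TopologicalSpace Xt] [TopologicalSpace X] [MulAction Γ Xt]
    [LocallyPathConnectedSpace X] where
  p : Xt → X
  continuous_p : Continuous p
  surjective_p : Function.Surjective p
  continuous_smul : ∀ g : Γ, Continuous fun z : Xt => g • z
  covering_action : ∀ z : Xt, ∃ V : Set Xt, IsOpen V ∧ z ∈ V ∧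
      ∀ g : Γ, ((fun w : Xt => g • w) '' V ∩ V).Nonempty → g = 1
  quotient_p : Topology.IsQuotientMap p
  fiber_eq : ∀ a b : Xt, p a = p b ↔ ∃ g : Γ, g • a = b

variable {Γ : Type*} [Group Γ] {Yt Y X : Type*}
  [TopologicalSpace Yt] [TopologicalSpace Y] [TopologicalSpace X] [MulAction Γ Yt]
  [LocallyPathConnectedSpace Y]

/-- Total space of the pullback of the covering `p : Ỹ → Y` along `f : X → Y`. -/
def Pullback (p : Yt → Y) (f : X → Y) : Type _ :=
  {q : X × Yt // f q.1 = p q.2}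

instance (p : Yt → Y) (f : X → Y) : TopologicalSpace (Pullback p f) :=
  instTopologicalSpaceSubtype

/-- The `Γ`-action on the pullback, acting on the second coordinate. -/
noncomputable instance pullbackSMul (hc : GammaCovering Γ Yt Y) (f : X → Y) :
    SMul Γ (Pullback hc.p f) where
  smul g q := ⟨(q.1.1, g • q.1.2), by
    rw [q.2, (hc.fiber_eq (g • q.1.2) q.1.2).mpr ⟨g⁻¹, inv_smul_smul g _⟩]⟩

/-- The projection `f_♯` from the pullback to `Ỹ`. -/
def fSharp (p : Yt → Y) (f : X → Y) : Pullback p f → Yt := fun q => q.1.2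

/-- The induced covering map `f* p` from the pullback to `X`. -/
def fStarP (p : Yt → Y) (f : X → Y) : Pullback p f → X := fun q => q.1.1

lemma GammaCovering.free (hc : GammaCovering Γ Yt Y) {g : Γ} {a : Yt} (h : g • a = a) :
    g = 1 := by
  obtain ⟨V, _, haV, hg⟩ := hc.covering_action a
  exact hg g ⟨a, ⟨a, haV, h⟩, haV⟩

lemma GammaCovering.smul_cancel (hc : GammaCovering Γ Yt Y) {g h : Γ} {a : Yt}
    (hgh : g • a = h • a) : g = h := by
  have : (h⁻¹ * g) • a = a := by rw [mul_smul, hgh, inv_smul_smul]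
  have := hc.free this
  rw [inv_mul_eq_one] at this; exact this.symm

lemma GammaCovering.unique_lift (hc : GammaCovering Γ Yt Y)
    {δ δ' : unitInterval → Yt} (hδ : Continuous δ) (hδ' : Continuous δ')
    (hp : ∀ t, hc.p (δ t) = hc.p (δ' t)) (h0 : δ 0 = δ' 0) : ∀ t, δ t = δ' t := by
  set S : Set unitInterval := {t | δ t = δ' t} with hS
  have hopen : IsOpen S := by
    rw [isOpen_iff_mem_nhds]
    intro t₀ ht₀
    obtain ⟨V, hV, hmem, hg⟩ := hc.covering_action (δ t₀)
    have hU : δ ⁻¹' V ∩ δ' ⁻¹' V ∈ nhds t₀ := by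
      apply Filter.inter_mem
      · exact hδ.continuousAt.preimage_mem_nhds (hV.mem_nhds hmem)
      · exact hδ'.continuousAt.preimage_mem_nhds (hV.mem_nhds (ht₀ ▸ hmem))
    filter_upwards [hU] with t ⟨h1, h2⟩
    obtain ⟨g, hgt⟩ := (hc.fiber_eq (δ t) (δ' t)).mp (hp t)
    have := hg g ⟨δ' t, ⟨δ t, h1, hgt⟩, h2⟩
    rw [this, one_smul] at hgt
    exact hgt
  have hclosed : IsClosed S := by
    rw [← isOpen_compl_iff, isOpen_iff_mem_nhds]
    intro t₀ ht₀
    obtain ⟨g, hgt⟩ := (hc.fiber_eq (δ t₀) (δ' t₀)).mp (hp t₀)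
    obtain ⟨V, hV, hmem, hg⟩ := hc.covering_action (δ t₀)
    have hW : IsOpen ((fun w : Yt => g⁻¹ • w) ⁻¹' V) := hV.preimage (hc.continuous_smul g⁻¹)
    have hU : δ ⁻¹' V ∩ δ' ⁻¹' ((fun w : Yt => g⁻¹ • w) ⁻¹' V) ∈ nhds t₀ := by
      apply Filter.inter_mem
      · exact hδ.continuousAt.preimage_mem_nhds (hV.mem_nhds hmem)
      · refine hδ'.continuousAt.preimage_mem_nhds (hW.mem_nhds ?_)
        show g⁻¹ • δ' t₀ ∈ V
        rw [← hgt, inv_smul_smul]; exact hmem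
    filter_upwards [hU] with t ⟨h1, h2⟩
    intro hts
    have heq : δ t = δ' t := hts
    have h2' : g⁻¹ • δ t ∈ V := heq ▸ h2
    have hg1 : g = 1 := hg g ⟨δ t, ⟨g⁻¹ • δ t, h2', smul_inv_smul g _⟩, h1⟩
    rw [hg1, one_smul] at hgt
    exact ht₀ hgt
  have : S = Set.univ := IsClopen.eq_univ (And.intro hclosed hopen) ⟨0, h0⟩
  intro t
  exact (this ▸ Set.mem_univ t : t ∈ S)

lemma continuous_fSharp (p : Yt → Y) (f : X → Y) : Continuous (fSharp p f) :=
  continuous_snd.comp continuous_subtype_val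

/-- Let `lam` be a pseudo-section of the induced covering `f* p` and
`lamY` one of `p`, with monodromies `μX` and `μY` (characterised via path lifting), that
agree over some point `x₀` : `f_♯ (lam x₀) = lamY (f x₀)`. Then
`μX = μY ∘ Π f` (i.e. `μX ⟦γ⟧ = μY ⟦f ∘ γ⟧` for all paths `γ` in `X`) if and only if
`f_♯ ∘ lam = lamY ∘ f` everywhere. -/
theorem pullback_monodromy_iff_compatible_sections
    [PathConnectedSpace X]
    (hc : GammaCovering Γ Yt Y) (f : X → Y) (hf : Continuous f)
    (lamY : Y → Yt) (hlamY : ∀ y, hc.p (lamY y) = y)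
    (lam : X → Pullback hc.p f) (hlam : ∀ x, fStarP hc.p f (lam x) = x)
    (μX : ∀ x y : X, Path.Homotopic.Quotient x y → Γ)
    (μY : ∀ a b : Y, Path.Homotopic.Quotient a b → Γ)
    (hμX : ∀ (x y : X) (γ : Path x y),
        ∃ γt : Path (lam x) ((μX x y ⟦γ⟧) • lam y), ∀ t, fStarP hc.p f (γt t) = γ t)
    (hμY : ∀ (a b : Y) (δ : Path a b),
        ∃ δt : Path (lamY a) ((μY a b ⟦δ⟧) • lamY b), ∀ t, hc.p (δt t) = δ t)
    (x₀ : X) (h₀ : fSharp hc.p f (lam x₀) = lamY (f x₀)) :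
    (∀ (x y : X) (γ : Path x y), μX x y ⟦γ⟧ = μY (f x) (f y) ⟦γ.map hf⟧) ↔
      (∀ x : X, fSharp hc.p f (lam x) = lamY (f x)) := by
  have fsmul : ∀ (g : Γ) (q : Pullback hc.p f),
      fSharp hc.p f (pullbackSMul hc f |>.smul g q) = g • fSharp hc.p f q := fun _ _ => rfl
  have key : ∀ (x y : X) (γ : Path x y),
      (μX x y ⟦γ⟧) • fSharp hc.p f (lam y)
        = (μY (f x) (f y) ⟦γ.map hf⟧) • lamY (f y)
      ∨ fSharp hc.p f (lam x) ≠ lamY (f x) := by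
    intro x y γ
    by_cases hx : fSharp hc.p f (lam x) = lamY (f x)
    · left
      obtain ⟨γt, hγt⟩ := hμX x y γ
      obtain ⟨δt, hδt⟩ := hμY (f x) (f y) (γ.map hf)
      have huniq := hc.unique_lift
        ((continuous_fSharp hc.p f).comp γt.continuous) δt.continuous
        (δ := fun t => fSharp hc.p f (γt t)) (δ' := fun t => δt t)
        (fun t => by
          have h1 : hc.p (fSharp hc.p f (γt t)) = f (fStarP hc.p f (γt t)) := (γt t).2.symm
          rw [h1, hγt t, hδt t]; rfl)
        (by
          show fSharp hc.p f (γt 0) = δt 0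
          rw [γt.source, δt.source, hx]) 1
      have h1 : fSharp hc.p f (γt 1) = δt 1 := huniq
      rw [γt.target, δt.target] at h1
      exact h1
    · right; exact hx
  constructor
  · intro H x
    obtain ⟨γ⟩ : Nonempty (Path x₀ x) := PathConnectedSpace.joined x₀ x
    rcases key x₀ x γ with h | h
    · rw [← H x₀ x γ] at h
      exact MulAction.injective (μX x₀ x ⟦γ⟧) h
    · exact absurd h₀ h
  · intro H x y γ
    rcases key x y γ with h | h
    · rw [H y] at h
      exact hc.smul_cancel h
    · exact absurd (H x) h
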